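/- Let {φ_t}_{t≥1} be vectors in R^d with ||φ_t||_2 ≤ 1 for all t, and let Λ_0 be a symmetric positive definite matrix with smallest eigenvalue at least 1. Define Λ_t = Λ_0 + Σ_{j=1}^t φ_j φ_jᵀ. Then log(det(Λ_t)/det(Λ_0)) ≤ Σ_{j=1}^t φ_jᵀ Λ_{j-1}^{-1} φ_j ≤ 2 log(det(Λ_t)/det(Λ_0)). -/

import Mathlib

open Matrix Finset

private lemma log_one_add_le {x : ℝ} (hx : 0 ≤ x) : Real.log (1 + x) ≤ x := by
  have := Real.log_le_sub_one_of_pos (by linarith : (0:ℝ) < 1 + x)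
  linarith

private lemma le_two_log_one_add {x : ℝ} (hx0 : 0 ≤ x) (hx1 : x ≤ 1) :
    x ≤ 2 * Real.log (1 + x) := by
  have h2 : (0:ℝ) < 1 - x / 2 := by linarith
  have hexp : Real.exp (x / 2) ≤ 1 + x := by
    have h3 : (1 - x / 2) * Real.exp (x / 2) ≤ 1 := by
      have h4 : 1 - x / 2 ≤ Real.exp (-(x / 2)) := by
        have := Real.add_one_le_exp (-(x / 2)); linarith
      calc (1 - x / 2) * Real.exp (x / 2)
          ≤ Real.exp (-(x / 2)) * Real.exp (x / 2) := by
            exact mul_le_mul_of_nonneg_right h4 (Real.exp_pos _).le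
        _ = 1 := by rw [← Real.exp_add]; simp
    nlinarith [Real.exp_pos (x / 2), sq_nonneg x]
  have := Real.log_le_log (Real.exp_pos _) hexp
  rw [Real.log_exp] at this
  linarith

private lemma vecMulVec_posSemidef {d : ℕ} (v : Fin d → ℝ) :
    (vecMulVec v v).PosSemidef := by
  refine Matrix.PosSemidef.of_dotProduct_mulVec_nonneg ?_ ?_
  · ext i j
    simp [vecMulVec, conjTranspose_apply, mul_comm]
  · intro x
    have h : vecMulVec v v *ᵥ x = (v ⬝ᵥ x) • v := by
      ext i
      simp [mulVec, vecMulVec, dotProduct, Finset.mul_sum, mul_comm, mul_left_comm, mul_assoc]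
    rw [h, star_trivial, dotProduct_smul]
    have : x ⬝ᵥ v = v ⬝ᵥ x := dotProduct_comm _ _
    rw [this]
    simpa using mul_self_nonneg (v ⬝ᵥ x)

private lemma quad_inv_le_one {d : ℕ} {A : Matrix (Fin d) (Fin d) ℝ}
    (hA : A.PosDef) (h1 : (A - 1).PosSemidef) {v : Fin d → ℝ} (hv : v ⬝ᵥ v ≤ 1) :
    v ⬝ᵥ A⁻¹ *ᵥ v ≤ 1 := by
  set y : Fin d → ℝ := A⁻¹ *ᵥ v with hy
  have hAy : A *ᵥ y = v := by
    rw [hy, mulVec_mulVec, Matrix.mul_nonsing_inv A (isUnit_iff_ne_zero.2 hA.det_pos.ne'),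
      one_mulVec]
  have hq : 0 ≤ y ⬝ᵥ ((A - 1) *ᵥ y) := by simpa [star_trivial] using h1.dotProduct_mulVec_nonneg y
  have hyv : y ⬝ᵥ y ≤ y ⬝ᵥ v := by
    have : (A - 1) *ᵥ y = v - y := by rw [sub_mulVec, hAy, one_mulVec]
    rw [this, dotProduct_sub] at hq
    linarith
  have hs0 : 0 ≤ v ⬝ᵥ y := by simpa [star_trivial, hy] using hA.inv.posSemidef.dotProduct_mulVec_nonneg v
  have hcs : (v ⬝ᵥ y) ^ 2 ≤ (v ⬝ᵥ v) * (y ⬝ᵥ y) := by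
    have := Finset.sum_mul_sq_le_sq_mul_sq Finset.univ v y
    simpa [dotProduct, pow_two, mul_comm, mul_left_comm] using this
  have hyy0 : 0 ≤ y ⬝ᵥ y := by
    simpa [dotProduct, pow_two] using Finset.sum_nonneg fun i _ => mul_self_nonneg (y i)
  have hcomm : y ⬝ᵥ v = v ⬝ᵥ y := dotProduct_comm _ _
  nlinarith [hcs, hyv, hs0, hv, hyy0]

theorem elliptical_potential (d : ℕ) (φ : ℕ → Fin d → ℝ)
    (hφ : ∀ t, φ t ⬝ᵥ φ t ≤ 1)
    (Λ₀ : Matrix (Fin d) (Fin d) ℝ) (hΛ₀ : Λ₀.PosDef)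
    (hΛ₀min : (Λ₀ - (1 : Matrix (Fin d) (Fin d) ℝ)).PosSemidef)
    (Λ : ℕ → Matrix (Fin d) (Fin d) ℝ)
    (hΛ : ∀ t, Λ t = Λ₀ + ∑ j ∈ Finset.range t, vecMulVec (φ j) (φ j)) :
    ∀ t : ℕ,
      Real.log ((Λ t).det / Λ₀.det) ≤
        (∑ j ∈ Finset.range t, φ j ⬝ᵥ (Λ j)⁻¹ *ᵥ φ j) ∧
      (∑ j ∈ Finset.range t, φ j ⬝ᵥ (Λ j)⁻¹ *ᵥ φ j) ≤
        2 * Real.log ((Λ t).det / Λ₀.det) := by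
  set x : ℕ → ℝ := fun j => φ j ⬝ᵥ (Λ j)⁻¹ *ᵥ φ j with hx
  have hpsd : ∀ j, (∑ k ∈ Finset.range j, vecMulVec (φ k) (φ k)).PosSemidef := by
    intro j
    induction j with
    | zero => simpa using Matrix.PosSemidef.zero
    | succ n ih =>
        rw [Finset.sum_range_succ]
        exact ih.add (vecMulVec_posSemidef _)
  have hpos : ∀ j, (Λ j).PosDef := fun j => by
    rw [hΛ]; exact hΛ₀.add_posSemidef (hpsd j)
  have hsub : ∀ j, (Λ j - 1).PosSemidef := fun j => by
    have : Λ j - 1 = (Λ₀ - 1) + ∑ k ∈ Finset.range j, vecMulVec (φ k) (φ k) := by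
      rw [hΛ]; abel
    rw [this]; exact hΛ₀min.add (hpsd j)
  have hx0 : ∀ j, 0 ≤ x j := fun j => by
    simpa [hx, star_trivial] using (hpos j).inv.posSemidef.dotProduct_mulVec_nonneg (φ j)
  have hx1 : ∀ j, x j ≤ 1 := fun j => quad_inv_le_one (hpos j) (hsub j) (hφ j)
  have hdet : ∀ j, (Λ (j + 1)).det = (Λ j).det * (1 + x j) := by
    intro j
    have hAdd : Λ (j + 1) = Λ j + vecMulVec (φ j) (φ j) := by
      rw [hΛ, hΛ, Finset.sum_range_succ, add_assoc]
    have hu : IsUnit (Λ j).det := isUnit_iff_ne_zero.2 (hpos j).det_pos.ne'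
    rw [hAdd, vecMulVec_eq Unit, det_add_replicateCol_mul_replicateRow hu]
    have hentry : (1 + replicateRow Unit (φ j) * (Λ j)⁻¹ * replicateCol Unit (φ j)).det = 1 + x j := by
      rw [det_unique]
      simp only [Matrix.add_apply, one_apply_eq, hx]
      congr 1
      simp only [mul_apply, replicateCol_apply, replicateRow_apply, dotProduct, mulVec,
        Finset.univ_unique, Finset.sum_singleton, Finset.sum_mul, Finset.mul_sum]
      rw [Finset.sum_comm]
      apply Finset.sum_congr rfl
      intro i _
      apply Finset.sum_congr rfl
      intro k _
      ring
    rw [hentry]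
  have hlog : ∀ t, Real.log ((Λ t).det / Λ₀.det)
      = ∑ j ∈ Finset.range t, Real.log (1 + x j) := by
    intro t
    induction t with
    | zero => simp [hΛ 0, div_self hΛ₀.det_pos.ne']
    | succ n ih =>
        rw [Finset.sum_range_succ, ← ih, hdet n, mul_comm, mul_div_assoc,
          Real.log_mul (ne_of_gt (by linarith [hx0 n] : (0:ℝ) < 1 + x n))
            (div_ne_zero (hpos n).det_pos.ne' hΛ₀.det_pos.ne'), add_comm]
  intro t
  rw [hlog t]
  constructor
  · exact Finset.sum_le_sum fun j _ => log_one_add_le (hx0 j)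
  · rw [Finset.mul_sum]
    exact Finset.sum_le_sum fun j _ => le_two_log_one_add (hx0 j) (hx1 j)
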